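/- For every d ≥ 1, the mutual-visibility number of the hypercube satisfies μ(Q_d) ≥ C(d, ⌊d/2⌋) + C(d, ⌊d/2⌋ + 3), where C(n,k) denotes the binomial coefficient. -/

import Mathlib

open SimpleGraph

/-- Two vertices are `X`-visible in `G`: some shortest path between them has
no internal vertex in `X`. -/
def IsVisiblePair {V : Type*} (G : SimpleGraph V) (X : Set V) (x y : V) : Prop :=
  ∃ p : G.Walk x y, p.IsPath ∧ p.length = G.dist x y ∧
    ∀ z ∈ p.support, z ∈ X → z = x ∨ z = y

/-- `X` is a mutual-visibility set of `G`. -/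
def MutualVisSet {V : Type*} (G : SimpleGraph V) (X : Set V) : Prop :=
  ∀ x ∈ X, ∀ y ∈ X, IsVisiblePair G X x y

/-- `X` is a total mutual-visibility set of `G`. -/
def TotalMutualVisSet {V : Type*} (G : SimpleGraph V) (X : Set V) : Prop :=
  ∀ x y : V, IsVisiblePair G X x y

/-- The mutual-visibility number `μ(G)`. -/
noncomputable def mutualVisNum {V : Type*} (G : SimpleGraph V) : ℕ :=
  sSup {n | ∃ X : Set V, MutualVisSet G X ∧ X.ncard = n}

/-- The total mutual-visibility number `μₜ(G)`. -/
noncomputable def totalMutualVisNum {V : Type*} (G : SimpleGraph V) : ℕ :=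
  sSup {n | ∃ X : Set V, TotalMutualVisSet G X ∧ X.ncard = n}

/-- A set of vertices is convex: every shortest path in `G` between two of its
vertices has all its vertices in the set. -/
def ConvexSet {V : Type*} (G : SimpleGraph V) (S : Set V) : Prop :=
  ∀ x ∈ S, ∀ y ∈ S, ∀ p : G.Walk x y, p.IsPath → p.length = G.dist x y →
    ∀ z ∈ p.support, z ∈ S

/-- The hypercube `Q_d`: vertices are `{0,1}^d`, adjacency is Hamming distance 1. -/
def Qube (d : ℕ) : SimpleGraph (Fin d → Bool) :=
  SimpleGraph.fromRel (fun x y => hammingDist x y = 1)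

namespace QubeAux
variable {d : ℕ}

def wt (v : Fin d → Bool) : ℕ := (Finset.univ.filter fun i => v i = true).card

lemma hamming_eq (v y : Fin d → Bool) :
    hammingDist v y =
      (Finset.univ.filter fun i => v i = false ∧ y i = true).card +
      (Finset.univ.filter fun i => v i = true ∧ y i = false).card := by
  rw [hammingDist, ← Finset.card_union_of_disjoint]
  · congr 1
    ext i
    simp only [Finset.mem_filter, Finset.mem_union, Finset.mem_univ, true_and]
    cases h1 : v i <;> cases h2 : y i <;> simp
  · rw [Finset.disjoint_filter]
    rintro i _ ⟨h, _⟩ ⟨h', _⟩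
    simp [h] at h'

lemma wt_rel (v y : Fin d → Bool) :
    wt y + (Finset.univ.filter fun i => v i = true ∧ y i = false).card =
    wt v + (Finset.univ.filter fun i => v i = false ∧ y i = true).card := by
  unfold wt
  rw [← Finset.card_union_of_disjoint, ← Finset.card_union_of_disjoint]
  · congr 1
    ext i
    simp only [Finset.mem_filter, Finset.mem_union, Finset.mem_univ, true_and]
    cases h1 : v i <;> cases h2 : y i <;> simp
  · rw [Finset.disjoint_filter]; rintro i _ h ⟨h', _⟩; simp [h] at h'
  · rw [Finset.disjoint_filter]; rintro i _ h ⟨_, h'⟩; simp [h] at h'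

lemma wt_update_true {v : Fin d → Bool} {i : Fin d} (h : v i = false) :
    wt (Function.update v i true) = wt v + 1 := by
  unfold wt
  have : (Finset.univ.filter fun j => Function.update v i true j = true)
      = insert i (Finset.univ.filter fun j => v j = true) := by
    ext j
    rcases eq_or_ne j i with rfl | hj <;>
      simp_all [Function.update_apply]
  rw [this, Finset.card_insert_of_notMem (by simp [h])]

lemma wt_update_false {v : Fin d → Bool} {i : Fin d} (h : v i = true) :
    wt (Function.update v i false) + 1 = wt v := by
  unfold wt
  have : (Finset.univ.filter fun j => Function.update v i false j = true)
      = (Finset.univ.filter fun j => v j = true).erase i := by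
    ext j
    rcases eq_or_ne j i with rfl | hj <;>
      simp_all [Function.update_apply]
  rw [this, Finset.card_erase_of_mem (by simp [h])]
  have : i ∈ Finset.univ.filter fun j => v j = true := by simp [h]
  have hc : 0 < (Finset.univ.filter fun j => v j = true).card := Finset.card_pos.2 ⟨i, this⟩
  omega

lemma hamming_update {v y : Fin d → Bool} {i : Fin d} (h : v i ≠ y i) :
    hammingDist (Function.update v i (y i)) y + 1 = hammingDist v y := by
  rw [hammingDist, hammingDist]
  have he : (Finset.univ.filter fun j => Function.update v i (y i) j ≠ y j)
      = (Finset.univ.filter fun j => v j ≠ y j).erase i := by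
    ext j
    rcases eq_or_ne j i with rfl | hj <;>
      simp_all [Function.update_apply]
  rw [he, Finset.card_erase_of_mem (by simp [h])]
  have : i ∈ Finset.univ.filter fun j => v j ≠ y j := by simp [h]
  have hc : 0 < (Finset.univ.filter fun j => v j ≠ y j).card := Finset.card_pos.2 ⟨i, this⟩
  omega

lemma adj_update {v : Fin d → Bool} {i : Fin d} {b : Bool} (h : v i ≠ b) :
    (Qube d).Adj v (Function.update v i b) := by
  rw [Qube, SimpleGraph.fromRel_adj]
  constructor
  · intro he
    apply h
    conv_lhs => rw [he]
    simp
  · left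
    rw [hammingDist]
    have : (Finset.univ.filter fun j => v j ≠ Function.update v i b j) = {i} := by
      ext j
      rcases eq_or_ne j i with rfl | hj <;> simp_all [Function.update_apply]
    rw [this, Finset.card_singleton]

lemma adj_of_hamming_one {v y : Fin d → Bool} (h : hammingDist v y = 1) :
    (Qube d).Adj v y := by
  rw [Qube, SimpleGraph.fromRel_adj]
  exact ⟨fun he => by simp [he, hammingDist_self] at h, Or.inl h⟩

lemma hamming_le_length {x y : Fin d → Bool} (p : (Qube d).Walk x y) :
    hammingDist x y ≤ p.length := by
  induction p with
  | nil => simp [hammingDist_self]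
  | cons h p ih =>
    rename_i u v w
    have h1 : hammingDist u v = 1 := by
      rw [Qube, SimpleGraph.fromRel_adj] at h
      rcases h.2 with h' | h'
      · exact h'
      · rw [hammingDist_comm]; exact h'
    calc hammingDist u w ≤ hammingDist u v + hammingDist v w := hammingDist_triangle _ _ _
      _ ≤ 1 + p.length := by omega
      _ = (Walk.cons h p).length := by simp [Walk.length_cons]; omega

/-- Step up towards `y`. -/
lemma step_up {v y : Fin d → Bool} {i : Fin d} (h1 : v i = false) (h2 : y i = true) :
    (Qube d).Adj v (Function.update v i true) ∧
    wt (Function.update v i true) = wt v + 1 ∧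
    hammingDist (Function.update v i true) y + 1 = hammingDist v y := by
  refine ⟨adj_update (by simp [h1]), wt_update_true h1, ?_⟩
  have := hamming_update (v := v) (y := y) (i := i) (by rw [h1, h2]; simp)
  rwa [h2] at this

lemma step_down {v y : Fin d → Bool} {i : Fin d} (h1 : v i = true) (h2 : y i = false) :
    (Qube d).Adj v (Function.update v i false) ∧
    wt (Function.update v i false) + 1 = wt v ∧
    hammingDist (Function.update v i false) y + 1 = hammingDist v y := by
  refine ⟨adj_update (by simp [h1]), wt_update_false h1, ?_⟩
  have := hamming_update (v := v) (y := y) (i := i) (by rw [h1, h2]; simp)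
  rwa [h2] at this

lemma exists_up {v y : Fin d → Bool}
    (h : (Finset.univ.filter fun i => v i = false ∧ y i = true).card ≠ 0) :
    ∃ i, v i = false ∧ y i = true := by
  obtain ⟨i, hi⟩ := Finset.card_ne_zero.1 h
  exact ⟨i, (Finset.mem_filter.1 hi).2⟩

lemma exists_down {v y : Fin d → Bool}
    (h : (Finset.univ.filter fun i => v i = true ∧ y i = false).card ≠ 0) :
    ∃ i, v i = true ∧ y i = false := by
  obtain ⟨i, hi⟩ := Finset.card_ne_zero.1 h
  exact ⟨i, (Finset.mem_filter.1 hi).2⟩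

/-- Walk from level `w+1` down to `y` at level `w`, staying in levels `w+1, w+2`. -/
lemma walkB (w : ℕ) : ∀ n (u y : Fin d → Bool), hammingDist u y = n → wt u = w + 1 → wt y = w →
    ∃ p : (Qube d).Walk u y, p.length = n ∧
      ∀ z ∈ p.support, z = y ∨ wt z = w + 1 ∨ wt z = w + 2 := by
  intro n
  induction n using Nat.strong_induction_on with
  | _ n ih =>
    intro u y hn hu hy
    have hab := hamming_eq u y
    have hw := wt_rel u y
    rw [hn] at hab
    have hn0 : n ≠ 0 := by
      intro h
      subst h
      have := eq_of_hammingDist_eq_zero hn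
      subst this
      omega
    rcases Nat.lt_or_ge n 2 with hn2 | hn2
    · have hn1 : n = 1 := by omega
      subst hn1
      refine ⟨Walk.cons (adj_of_hamming_one hn) Walk.nil, by simp, ?_⟩
      intro z hz
      simp only [Walk.support_cons, Walk.support_nil, List.mem_cons,
        List.not_mem_nil, or_false] at hz
      rcases hz with rfl | rfl
      · right; left; exact hu
      · left; rfl
    · have ha : (Finset.univ.filter fun i => u i = false ∧ y i = true).card ≠ 0 := by omega
      obtain ⟨i, hi1, hi2⟩ := exists_up ha
      obtain ⟨hadj1, hwt1, hh1⟩ := step_up (y := y) hi1 hi2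
      set u1 := Function.update u i true with hu1def
      have hwt1' : wt u1 = w + 2 := by omega
      have hd1 : hammingDist u1 y = n - 1 := by omega
      have hab1 := hamming_eq u1 y
      have hw1 := wt_rel u1 y
      rw [hd1] at hab1
      have hb1 : (Finset.univ.filter fun j => u1 j = true ∧ y j = false).card ≠ 0 := by omega
      obtain ⟨j, hj1, hj2⟩ := exists_down hb1
      obtain ⟨hadj2, hwt2, hh2⟩ := step_down (y := y) hj1 hj2
      set u2 := Function.update u1 j false with hu2def
      have hwt2' : wt u2 = w + 1 := by omega
      have hh2' : hammingDist u2 y = n - 2 := by omega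
      obtain ⟨p, hp, hps⟩ := ih (n - 2) (by omega) u2 y hh2' hwt2' hy
      refine ⟨Walk.cons hadj1 (Walk.cons hadj2 p), ?_, ?_⟩
      · simp only [Walk.length_cons, hp]; omega
      · intro z hz
        simp only [Walk.support_cons, List.mem_cons] at hz
        rcases hz with rfl | rfl | hz
        · right; left; exact hu
        · right; right; exact hwt1'
        · exact hps z hz

/-- Walk from level `w+2` up to `y` at level `w+3`, staying in levels `w+1, w+2`. -/
lemma walkD (w : ℕ) : ∀ n (u y : Fin d → Bool), hammingDist u y = n → wt u = w + 2 → wt y = w + 3 →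
    ∃ p : (Qube d).Walk u y, p.length = n ∧
      ∀ z ∈ p.support, z = y ∨ wt z = w + 1 ∨ wt z = w + 2 := by
  intro n
  induction n using Nat.strong_induction_on with
  | _ n ih =>
    intro u y hn hu hy
    have hab := hamming_eq u y
    have hw := wt_rel u y
    rw [hn] at hab
    have hn0 : n ≠ 0 := by
      intro h
      subst h
      have := eq_of_hammingDist_eq_zero hn
      subst this
      omega
    rcases Nat.lt_or_ge n 2 with hn2 | hn2
    · have hn1 : n = 1 := by omega
      subst hn1
      refine ⟨Walk.cons (adj_of_hamming_one hn) Walk.nil, by simp, ?_⟩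
      intro z hz
      simp only [Walk.support_cons, Walk.support_nil, List.mem_cons,
        List.not_mem_nil, or_false] at hz
      rcases hz with rfl | rfl
      · right; right; exact hu
      · left; rfl
    · have hb : (Finset.univ.filter fun i => u i = true ∧ y i = false).card ≠ 0 := by omega
      obtain ⟨j, hj1, hj2⟩ := exists_down hb
      obtain ⟨hadj1, hwt1, hh1⟩ := step_down (y := y) hj1 hj2
      set u1 := Function.update u j false with hu1def
      have hwt1' : wt u1 = w + 1 := by omega
      have hd1 : hammingDist u1 y = n - 1 := by omega
      have hab1 := hamming_eq u1 y
      have hw1 := wt_rel u1 y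
      rw [hd1] at hab1
      have ha1 : (Finset.univ.filter fun i => u1 i = false ∧ y i = true).card ≠ 0 := by omega
      obtain ⟨i, hi1, hi2⟩ := exists_up ha1
      obtain ⟨hadj2, hwt2, hh2⟩ := step_up (y := y) hi1 hi2
      set u2 := Function.update u1 i true with hu2def
      have hwt2' : wt u2 = w + 2 := by omega
      have hh2' : hammingDist u2 y = n - 2 := by omega
      obtain ⟨p, hp, hps⟩ := ih (n - 2) (by omega) u2 y hh2' hwt2' hy
      refine ⟨Walk.cons hadj1 (Walk.cons hadj2 p), ?_, ?_⟩
      · simp only [Walk.length_cons, hp]; omega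
      · intro z hz
        simp only [Walk.support_cons, List.mem_cons] at hz
        rcases hz with rfl | rfl | hz
        · right; right; exact hu
        · right; left; exact hwt1'
        · exact hps z hz

/-- Shortest walk between two level-`w` vertices through levels `w+1, w+2`. -/
lemma walkA (w : ℕ) (x y : Fin d → Bool) (hx : wt x = w) (hy : wt y = w) :
    ∃ p : (Qube d).Walk x y, p.length = hammingDist x y ∧
      ∀ z ∈ p.support, z = x ∨ z = y ∨ wt z = w + 1 ∨ wt z = w + 2 := by
  rcases eq_or_ne x y with rfl | hne
  · exact ⟨Walk.nil, by simp [hammingDist_self], by intro z hz; simp at hz; subst hz; left; rfl⟩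
  · have hab := hamming_eq x y
    have hw := wt_rel x y
    have hn0 : hammingDist x y ≠ 0 := fun h => hne (eq_of_hammingDist_eq_zero h)
    have ha : (Finset.univ.filter fun i => x i = false ∧ y i = true).card ≠ 0 := by omega
    obtain ⟨i, hi1, hi2⟩ := exists_up ha
    obtain ⟨hadj, hwt, hh⟩ := step_up (y := y) hi1 hi2
    set x1 := Function.update x i true with hx1def
    obtain ⟨p, hp, hps⟩ := walkB w (hammingDist x1 y) x1 y rfl (by omega) hy
    refine ⟨Walk.cons hadj p, by simp only [Walk.length_cons, hp]; omega, ?_⟩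
    intro z hz
    simp only [Walk.support_cons, List.mem_cons] at hz
    rcases hz with rfl | hz
    · left; rfl
    · rcases hps z hz with h | h
      · right; left; exact h
      · right; right; exact h

/-- Shortest walk between two level-`w+3` vertices through levels `w+1, w+2`. -/
lemma walkA3 (w : ℕ) (x y : Fin d → Bool) (hx : wt x = w + 3) (hy : wt y = w + 3) :
    ∃ p : (Qube d).Walk x y, p.length = hammingDist x y ∧
      ∀ z ∈ p.support, z = x ∨ z = y ∨ wt z = w + 1 ∨ wt z = w + 2 := by
  rcases eq_or_ne x y with rfl | hne
  · exact ⟨Walk.nil, by simp [hammingDist_self], by intro z hz; simp at hz; subst hz; left; rfl⟩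
  · have hab := hamming_eq x y
    have hw := wt_rel x y
    have hn0 : hammingDist x y ≠ 0 := fun h => hne (eq_of_hammingDist_eq_zero h)
    have hb : (Finset.univ.filter fun i => x i = true ∧ y i = false).card ≠ 0 := by omega
    obtain ⟨j, hj1, hj2⟩ := exists_down hb
    obtain ⟨hadj, hwt, hh⟩ := step_down (y := y) hj1 hj2
    set x1 := Function.update x j false with hx1def
    obtain ⟨p, hp, hps⟩ := walkD w (hammingDist x1 y) x1 y rfl (by omega) hy
    refine ⟨Walk.cons hadj p, by simp only [Walk.length_cons, hp]; omega, ?_⟩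
    intro z hz
    simp only [Walk.support_cons, List.mem_cons] at hz
    rcases hz with rfl | hz
    · left; rfl
    · rcases hps z hz with h | h
      · right; left; exact h
      · right; right; exact h

/-- Shortest walk from a level-`w` vertex to a level-`w+3` vertex through levels `w+1, w+2`. -/
lemma walkC (w : ℕ) (x y : Fin d → Bool) (hx : wt x = w) (hy : wt y = w + 3) :
    ∃ p : (Qube d).Walk x y, p.length = hammingDist x y ∧
      ∀ z ∈ p.support, z = x ∨ z = y ∨ wt z = w + 1 ∨ wt z = w + 2 := by
  have hab := hamming_eq x y
  have hw := wt_rel x y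
  have ha : (Finset.univ.filter fun i => x i = false ∧ y i = true).card ≠ 0 := by omega
  obtain ⟨i, hi1, hi2⟩ := exists_up ha
  obtain ⟨hadj1, hwt1, hh1⟩ := step_up (y := y) hi1 hi2
  set x1 := Function.update x i true with hx1def
  have hab1 := hamming_eq x1 y
  have hw1 := wt_rel x1 y
  have ha1 : (Finset.univ.filter fun i => x1 i = false ∧ y i = true).card ≠ 0 := by omega
  obtain ⟨i2, hi21, hi22⟩ := exists_up ha1
  obtain ⟨hadj2, hwt2, hh2⟩ := step_up (y := y) hi21 hi22
  set x2 := Function.update x1 i2 true with hx2def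
  obtain ⟨p, hp, hps⟩ := walkD w (hammingDist x2 y) x2 y rfl (by omega) hy
  refine ⟨Walk.cons hadj1 (Walk.cons hadj2 p), by simp only [Walk.length_cons, hp]; omega, ?_⟩
  intro z hz
  simp only [Walk.support_cons, List.mem_cons] at hz
  rcases hz with rfl | rfl | hz
  · left; rfl
  · right; right; left; omega
  · rcases hps z hz with h | h
    · right; left; exact h
    · right; right; exact h

lemma visible_pair (w : ℕ) {x y : Fin d → Bool}
    (hx : wt x = w ∨ wt x = w + 3) (hy : wt y = w ∨ wt y = w + 3) :
    IsVisiblePair (Qube d) {v | wt v = w ∨ wt v = w + 3} x y := by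
  have key : ∃ p : (Qube d).Walk x y, p.length = hammingDist x y ∧
      ∀ z ∈ p.support, z = x ∨ z = y ∨ wt z = w + 1 ∨ wt z = w + 2 := by
    rcases hx with hx | hx <;> rcases hy with hy | hy
    · exact walkA w x y hx hy
    · exact walkC w x y hx hy
    · obtain ⟨p, hp, hps⟩ := walkC w y x hy hx
      refine ⟨p.reverse, ?_, ?_⟩
      · rw [Walk.length_reverse, hp, hammingDist_comm]
      · intro z hz
        rw [Walk.support_reverse, List.mem_reverse] at hz
        rcases hps z hz with h | h | h
        · right; left; exact h
        · left; exact h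
        · right; right; exact h
    · exact walkA3 w x y hx hy
  obtain ⟨p, hlen, hsupp⟩ := key
  have hge : hammingDist x y ≤ (Qube d).dist x y := by
    obtain ⟨q, hq⟩ := Reachable.exists_walk_length_eq_dist ⟨p⟩
    rw [← hq]
    exact hamming_le_length q
  have hdist : (Qube d).dist x y = hammingDist x y :=
    le_antisymm (hlen ▸ SimpleGraph.dist_le p) hge
  refine ⟨p.bypass, p.bypass_isPath, ?_, ?_⟩
  · have h1 : (Qube d).dist x y ≤ p.bypass.length := SimpleGraph.dist_le _
    have h2 : p.bypass.length ≤ p.length := Walk.length_bypass_le p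
    omega
  · intro z hz hzX
    rcases hsupp z (Walk.support_bypass_subset p hz) with h | h | h | h
    · left; exact h
    · right; exact h
    · rcases hzX with h' | h' <;> omega
    · rcases hzX with h' | h' <;> omega

lemma card_level (k : ℕ) : ({v : Fin d → Bool | wt v = k}).ncard = d.choose k := by
  classical
  rw [Set.ncard_eq_toFinset_card', Set.toFinset_setOf]
  have : (Finset.univ.filter fun v : Fin d → Bool => wt v = k).card
      = (Finset.powersetCard k (Finset.univ : Finset (Fin d))).card := by
    apply Finset.card_bij (fun v _ => Finset.univ.filter fun i => v i = true)
    · intro v hv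
      simp only [Finset.mem_filter, Finset.mem_univ, true_and] at hv
      rw [Finset.mem_powersetCard]
      exact ⟨Finset.subset_univ _, hv⟩
    · intro v1 h1 v2 h2 heq
      funext i
      have := Finset.ext_iff.1 heq i
      simp only [Finset.mem_filter, Finset.mem_univ, true_and] at this
      cases hv1 : v1 i <;> cases hv2 : v2 i <;> simp_all
    · intro S hS
      rw [Finset.mem_powersetCard] at hS
      refine ⟨fun i => decide (i ∈ S), by
        refine Finset.mem_filter.2 ⟨Finset.mem_univ _, ?_⟩
        simpa [wt] using hS.2, ?_⟩
      ext i
      simp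
  rw [this, Finset.card_powersetCard, Finset.card_univ, Fintype.card_fin]

lemma card_X (w : ℕ) :
    ({v : Fin d → Bool | wt v = w ∨ wt v = w + 3}).ncard = d.choose w + d.choose (w + 3) := by
  classical
  have hset : {v : Fin d → Bool | wt v = w ∨ wt v = w + 3}
      = {v | wt v = w} ∪ {v | wt v = w + 3} := rfl
  rw [hset, Set.ncard_union_eq, card_level, card_level]
  rw [Set.disjoint_left]
  intro v hv hv'
  simp only [Set.mem_setOf_eq] at hv hv'
  omega

end QubeAux


/-- `μ(Q_d) ≥ C(d, ⌊d/2⌋) + C(d, ⌊d/2⌋ + 3)` for every `d ≥ 1`. -/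
theorem mu_Qube_lower_bound (d : ℕ) (hd : 1 ≤ d) :
    Nat.choose d (d / 2) + Nat.choose d (d / 2 + 3) ≤ mutualVisNum (Qube d) := by
  apply le_csSup
  · refine ⟨Nat.card (Fin d → Bool), ?_⟩
    rintro n ⟨Y, -, rfl⟩
    rw [← Set.ncard_univ]
    exact Set.ncard_le_ncard (Set.subset_univ Y) Set.finite_univ
  · exact ⟨{v | QubeAux.wt v = d / 2 ∨ QubeAux.wt v = d / 2 + 3},
      fun x hx y hy => QubeAux.visible_pair (d / 2) hx hy, QubeAux.card_X (d / 2)⟩
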